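/- Let n ≥ 3 and let Γ = Cay_L(Sym_n, S) be the left Star graph with S = {(1 i) : 2 ≤ i ≤ n}. Let H be the graph on the even permutations Alt_n where two vertices are adjacent iff they have a common neighbor in Γ. Then H is connected. -/
import Mathlib


/-- Let `n ≥ 3`, `Γ = Cay_L(Sym_n, S)` the left Star graph with
`S = {swap 0 i : i ≠ 0}` (0-based), and let `H` be the graph on the even
permutations in which two distinct vertices are adjacent iff they have a common
neighbor in `Γ`. Then `H` is connected. -/
theorem star_graph_distance_two_graph_connected
    (n : ℕ) (hn : 3 ≤ n)
    (S : Set (Equiv.Perm (Fin n)))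
    (hS : S = {σ | ∃ i : Fin n, i ≠ ⟨0, by omega⟩ ∧ σ = Equiv.swap ⟨0, by omega⟩ i})
    (Γ : SimpleGraph (Equiv.Perm (Fin n)))
    (hΓ : ∀ x y : Equiv.Perm (Fin n), Γ.Adj x y ↔ y⁻¹ * x ∈ S)
    (H : SimpleGraph {x : Equiv.Perm (Fin n) // Equiv.Perm.sign x = 1})
    (hH : ∀ x y : {x : Equiv.Perm (Fin n) // Equiv.Perm.sign x = 1},
      H.Adj x y ↔ x ≠ y ∧ ∃ z : Equiv.Perm (Fin n), Γ.Adj x.1 z ∧ Γ.Adj y.1 z) :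
    H.Connected := by
  have h0 : (0 : ℕ) < n := by omega
  set z0 : Fin n := ⟨0, h0⟩ with hz0
  -- each element of S is a swap, is its own inverse, has sign -1
  have hinv : ∀ s ∈ S, s⁻¹ = s := by
    rintro s hs
    rw [hS] at hs
    obtain ⟨i, hi, rfl⟩ := hs
    exact Equiv.swap_inv _ _
  have hsign : ∀ s ∈ S, Equiv.Perm.sign s = -1 := by
    rintro s hs
    rw [hS] at hs
    obtain ⟨i, hi, rfl⟩ := hs
    exact Equiv.Perm.sign_swap (Ne.symm hi)
  -- S generates the whole monoid
  have hclos : Submonoid.closure S = ⊤ := by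
    rw [eq_top_iff, ← Equiv.Perm.mclosure_isSwap, Submonoid.closure_le]
    rintro σ ⟨a, b, hab, rfl⟩
    by_cases ha : a = z0
    · subst ha
      exact Submonoid.subset_closure (by rw [hS]; exact ⟨b, Ne.symm hab, rfl⟩)
    by_cases hb : b = z0
    · subst hb
      rw [Equiv.swap_comm]
      exact Submonoid.subset_closure (by rw [hS]; exact ⟨a, hab, rfl⟩)
    · have key : Equiv.swap a b = Equiv.swap z0 a * Equiv.swap b z0 * Equiv.swap z0 a :=
        (Equiv.swap_mul_swap_mul_swap hb (Ne.symm hab)).symm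
      rw [key, Equiv.swap_comm b z0]
      have mem : ∀ c : Fin n, c ≠ z0 → Equiv.swap z0 c ∈ Submonoid.closure S := fun c hc =>
        Submonoid.subset_closure (by rw [hS]; exact ⟨c, hc, rfl⟩)
      exact mul_mem (mul_mem (mem a ha) (mem b hb)) (mem a ha)
  -- key step lemma
  have step : ∀ (x : {x : Equiv.Perm (Fin n) // Equiv.Perm.sign x = 1}) (s t : Equiv.Perm (Fin n)),
      s ∈ S → t ∈ S → ∀ (h : Equiv.Perm.sign (x.1 * s * t) = 1),
      H.Reachable x ⟨x.1 * s * t, h⟩ := by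
    intro x s t hs ht h
    by_cases he : x = (⟨x.1 * s * t, h⟩ : {x : Equiv.Perm (Fin n) // Equiv.Perm.sign x = 1})
    · rw [← he]
    · apply SimpleGraph.Adj.reachable
      rw [hH]
      refine ⟨he, x.1 * s, ?_, ?_⟩
      · rw [hΓ]
        simpa [mul_inv_rev, mul_assoc, hinv s hs] using hs
      · rw [hΓ]
        have : (x.1 * s)⁻¹ * (x.1 * s * t) = t := by
          rw [mul_assoc x.1 s t]; exact inv_mul_cancel_left _ _
        rwa [this]
  -- reachability along even-length words
  have main : ∀ (l : List (Equiv.Perm (Fin n))), (∀ y ∈ l, y ∈ S) →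
      ∀ (x : {x : Equiv.Perm (Fin n) // Equiv.Perm.sign x = 1})
        (h : Equiv.Perm.sign (x.1 * l.prod) = 1),
      H.Reachable x ⟨x.1 * l.prod, h⟩ := by
    suffices hmain : ∀ (k : ℕ) (l : List (Equiv.Perm (Fin n))), l.length ≤ k → (∀ y ∈ l, y ∈ S) →
        ∀ (x : {x : Equiv.Perm (Fin n) // Equiv.Perm.sign x = 1})
          (h : Equiv.Perm.sign (x.1 * l.prod) = 1),
        H.Reachable x ⟨x.1 * l.prod, h⟩ by
      intro l; exact hmain l.length l le_rfl
    intro k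
    induction k using Nat.strong_induction_on with
    | _ k ih =>
      intro l hlen
      match l with
      | [] =>
        intro _ x h
        have : x = (⟨x.1 * List.prod [], h⟩ : {x : Equiv.Perm (Fin n) // Equiv.Perm.sign x = 1}) :=
          Subtype.ext (by simp)
        rw [← this]
      | [s] =>
        intro hmem x h
        exfalso
        have : Equiv.Perm.sign (x.1 * s) = -1 := by
          rw [map_mul, x.2, hsign s (hmem s (by simp)), one_mul]
        simp only [List.prod_cons, List.prod_nil, mul_one] at h
        rw [h] at this
        exact (by decide : (1 : ℤˣ) ≠ -1) this
      | s :: t :: rest =>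
        intro hmem x h
        have hs : s ∈ S := hmem s (by simp)
        have ht : t ∈ S := hmem t (by simp)
        have hst : Equiv.Perm.sign (x.1 * s * t) = 1 := by
          rw [map_mul, map_mul, x.2, hsign s hs, hsign t ht]; decide
        have h2 : Equiv.Perm.sign ((x.1 * s * t) * rest.prod) = 1 := by
          simpa [mul_assoc] using h
        have r1 := step x s t hs ht hst
        have hk : rest.length < k := by simp at hlen; omega
        have r2 := ih rest.length hk rest le_rfl (fun y hy => hmem y (by simp [hy]))
            ⟨x.1 * s * t, hst⟩ h2
        have : (⟨(x.1 * s * t) * rest.prod, h2⟩ :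
            {x : Equiv.Perm (Fin n) // Equiv.Perm.sign x = 1}) = ⟨x.1 * (s :: t :: rest).prod, h⟩ :=
          Subtype.ext (by simp [mul_assoc])
        exact r1.trans (this ▸ r2)
  rw [SimpleGraph.connected_iff]
  refine ⟨?_, ⟨⟨1, Equiv.Perm.sign_one⟩⟩⟩
  · intro x y
    have hmem : x.1⁻¹ * y.1 ∈ Submonoid.closure S := by rw [hclos]; trivial
    obtain ⟨l, hl, hprod⟩ := Submonoid.exists_list_of_mem_closure hmem
    have h : Equiv.Perm.sign (x.1 * l.prod) = 1 := by
      rw [hprod]; simp [y.2]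
    have := main l hl x h
    have hy : (⟨x.1 * l.prod, h⟩ : {x : Equiv.Perm (Fin n) // Equiv.Perm.sign x = 1}) = y :=
      Subtype.ext (show x.1 * l.prod = y.1 by rw [hprod]; group)
    rwa [hy] at this
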